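/- Let n ≥ 2, let T > 0, and let x : ℝ → ℝⁿ be differentiable at time t with x_i(t) ∈ (0,1) for every i and Σ_i x_i(t) = 1, and suppose that at time t each coordinate satisfies the pure-exploration Q-learning equation ẋ_i(t) = T·x_i(t)·(−ln x_i(t) + Σ_j x_j(t)·ln x_j(t)). Then the derivative at t of the entropy H(t) = −Σ_i x_i(t)·ln x_i(t) equals T·(Σ_i x_i(t)·(ln x_i(t))² − (Σ_i x_i(t)·ln x_i(t))²), and if x(t) is not the uniform vector (1/n, …, 1/n) then this derivative is strictly positive. -/

import Mathlib

open Real Filter Set Topology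

theorem stmt_19 (n : ℕ) (hn : 2 ≤ n) (T : ℝ) (hT : 0 < T)
    (x : ℝ → Fin n → ℝ) (t : ℝ)
    (hdiff : ∀ i, DifferentiableAt ℝ (fun s => x s i) t)
    (hmem : ∀ i, x t i ∈ Set.Ioo (0:ℝ) 1)
    (hsum : ∑ i, x t i = 1)
    (hode : ∀ i, deriv (fun s => x s i) t =
      T * x t i * (-Real.log (x t i) + ∑ j, x t j * Real.log (x t j))) :
    deriv (fun s => -∑ i, x s i * Real.log (x s i)) t =
      T * ((∑ i, x t i * (Real.log (x t i))^2) - (∑ i, x t i * Real.log (x t i))^2) ∧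
    (x t ≠ (fun _ => (n : ℝ)⁻¹) →
      0 < deriv (fun s => -∑ i, x s i * Real.log (x s i)) t) := by
  have hpos : ∀ i, 0 < x t i := fun i => (hmem i).1
  set L : Fin n → ℝ := fun i => Real.log (x t i) with hL
  set S : ℝ := ∑ j, x t j * Real.log (x t j) with hS
  have hd : ∀ i, HasDerivAt (fun s => x s i * Real.log (x s i))
      (T * x t i * (-L i + S) * (L i + 1)) t := by
    intro i
    have h1 := (hdiff i).hasDerivAt
    have h2 := h1.log (ne_of_gt (hpos i))
    have h3 := h1.fun_mul h2
    refine h3.congr_deriv ?_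
    rw [hode i]
    have hx : x t i ≠ 0 := ne_of_gt (hpos i)
    field_simp
    ring
  have hsum' : HasDerivAt (fun s => -∑ i, x s i * Real.log (x s i))
      (-∑ i, T * x t i * (-L i + S) * (L i + 1)) t :=
    (HasDerivAt.fun_sum (fun i _ => hd i)).neg
  have e1 : ∑ i, T * x t i * (-L i + S) * (L i + 1)
      = T*S*S + T*S*1 - T*(∑ i, x t i * (L i)^2) - T*S := by
    have : ∀ i ∈ Finset.univ, T * x t i * (-L i + S) * (L i + 1)
        = T*S*(x t i * L i) + T*S*(x t i) - T*(x t i * (L i)^2) - T*(x t i * L i) := by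
      intro i _; ring
    rw [Finset.sum_congr rfl this]
    simp only [Finset.sum_sub_distrib, Finset.sum_add_distrib, ← Finset.mul_sum,
      ← hS, hsum]
    rfl
  have key : deriv (fun s => -∑ i, x s i * Real.log (x s i)) t
      = T * ((∑ i, x t i * (L i)^2) - S^2) := by
    rw [hsum'.deriv, e1]; ring
  have hvar : (∑ i, x t i * (L i)^2) - S^2 = ∑ i, x t i * (L i - S)^2 := by
    have : ∀ i ∈ Finset.univ, x t i * (L i - S)^2
        = x t i * (L i)^2 - 2*S*(x t i * L i) + S^2 * (x t i) := by
      intro i _; ring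
    rw [Finset.sum_congr rfl this]
    simp only [Finset.sum_sub_distrib, Finset.sum_add_distrib, ← Finset.mul_sum,
      ← hS, hsum]
    ring
  refine ⟨key, fun hne => ?_⟩
  rw [key, hvar]
  have hnn : ∀ i ∈ Finset.univ, (0:ℝ) ≤ x t i * (L i - S)^2 :=
    fun i _ => mul_nonneg (hpos i).le (sq_nonneg _)
  have hne0 : ∑ i, x t i * (L i - S)^2 ≠ 0 := by
    intro h0
    have hall := (Finset.sum_eq_zero_iff_of_nonneg hnn).mp h0
    have hxi : ∀ i, x t i = Real.exp S := by
      intro i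
      have := hall i (Finset.mem_univ i)
      have hLS : L i = S := by
        have := mul_eq_zero.mp this
        rcases this with h | h
        · exact absurd h (ne_of_gt (hpos i))
        · have := pow_eq_zero_iff (n := 2) (by norm_num) |>.mp h
          linarith
      rw [← hLS, hL]
      exact (Real.exp_log (hpos i)).symm
    have hsum2 : (n : ℝ) * Real.exp S = 1 := by
      rw [← hsum, Finset.sum_congr rfl (fun i _ => hxi i)]
      simp [Finset.card_univ]
    apply hne
    funext i
    rw [hxi i]
    have hn0 : (n:ℝ) ≠ 0 := by positivity
    field_simp at hsum2 ⊢
    linarith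
  exact mul_pos hT (lt_of_le_of_ne (Finset.sum_nonneg hnn) (Ne.symm hne0))
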